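/- On the circle 𝕋 = ℝ/2πℤ, define μ* by dμ*(x) = (Σ_{k=1}^∞ g_k(x)) dx, where g_k = (2/π)·𝟙_{(π/2^k − π/2^{k+1}, π/2^k + π/2^{k+1}]} restricted appropriately so that the intervals I_k = B(π/2^k, π/2^{k+1}] are disjoint for distinct k. Then μ* is a probability measure, and there exists c > 0 such that for every x ∈ supp(μ*) and every r ∈ (0, π/8]: c·r ≤ μ*(B(x,r)) ≤ 2r, where B(x,r) is the arc of radius r around x. -/

import Mathlib

open MeasureTheory Metric
open scoped ENNReal

/-- The support of a measure: points all of whose closed balls have positive measure. -/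
def msupport {X : Type*} [MeasurableSpace X] [PseudoMetricSpace X] (μ : Measure X) : Set X :=
  {x | ∀ r : ℝ, 0 < r → 0 < μ (Metric.closedBall x r)}

instance : Fact (0 < 2 * Real.pi) := ⟨by positivity⟩

/-- The measure on 𝕋 = ℝ/2πℤ with density (2/π) Σ_k 𝟙_{(π/2^{k+1}, π/2^k]}. -/
noncomputable def mu13 : Measure (AddCircle (2 * Real.pi)) :=
  (volume : Measure (AddCircle (2 * Real.pi))).withDensity fun x =>
    ∑' k : ℕ,
      Set.indicator
        ((fun t : ℝ => (t : AddCircle (2 * Real.pi))) ''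
          Set.Ioc (Real.pi / 2 ^ (k + 2)) (Real.pi / 2 ^ (k + 1)))
        (fun _ => ENNReal.ofReal (2 / Real.pi)) x

private lemma coe_inj13 {x y : ℝ} (hx : x ∈ Set.Ioc 0 (2 * Real.pi))
    (hy : y ∈ Set.Ioc 0 (2 * Real.pi)) (h : (x : AddCircle (2 * Real.pi)) = y) : x = y := by
  have hx' : x ∈ Set.Ioc (0:ℝ) (0 + 2 * Real.pi) := by rwa [zero_add]
  have hy' : y ∈ Set.Ioc (0:ℝ) (0 + 2 * Real.pi) := by rwa [zero_add]
  have e1 : AddCircle.equivIoc (2 * Real.pi) 0 (x : AddCircle (2 * Real.pi)) = ⟨x, hx'⟩ := by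
    rw [Equiv.apply_eq_iff_eq_symm_apply]; rfl
  have e2 : AddCircle.equivIoc (2 * Real.pi) 0 (y : AddCircle (2 * Real.pi)) = ⟨y, hy'⟩ := by
    rw [Equiv.apply_eq_iff_eq_symm_apply]; rfl
  rw [h, e2] at e1
  exact (Subtype.mk.inj e1).symm

private lemma image_coe_eq (a b : ℝ) (h0 : 0 ≤ a) (hb : b ≤ 2 * Real.pi) :
    ((fun t : ℝ => (t : AddCircle (2 * Real.pi))) '' Set.Ioc a b)
      = (fun z => (AddCircle.equivIoc (2 * Real.pi) 0 z : ℝ)) ⁻¹' Set.Ioc a b := by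
  ext z
  constructor
  · rintro ⟨s, hs, rfl⟩
    have hs' : s ∈ Set.Ioc (0:ℝ) (0 + 2 * Real.pi) :=
      ⟨lt_of_le_of_lt h0 hs.1, by rw [zero_add]; exact hs.2.trans hb⟩
    have e1 : AddCircle.equivIoc (2 * Real.pi) 0 ((s : ℝ) : AddCircle (2 * Real.pi)) = ⟨s, hs'⟩ := by
      rw [Equiv.apply_eq_iff_eq_symm_apply]; rfl
    simpa [Set.mem_preimage, e1] using hs
  · intro hz
    exact ⟨(AddCircle.equivIoc (2 * Real.pi) 0 z : ℝ), hz,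
      (AddCircle.equivIoc (2 * Real.pi) 0).symm_apply_apply z⟩

private lemma meas_image13 (a b : ℝ) (h0 : 0 ≤ a) (hb : b ≤ 2 * Real.pi) :
    MeasurableSet ((fun t : ℝ => (t : AddCircle (2 * Real.pi))) '' Set.Ioc a b) := by
  rw [image_coe_eq a b h0 hb]
  exact (measurable_subtype_coe.comp
    (AddCircle.measurableEquivIoc (2 * Real.pi) 0).measurable) measurableSet_Ioc

private lemma vol_image13 (a b : ℝ) (h0 : 0 ≤ a) (hb : b ≤ 2 * Real.pi) :
    volume ((fun t : ℝ => (t : AddCircle (2 * Real.pi))) '' Set.Ioc a b)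
      = ENNReal.ofReal (b - a) := by
  rw [AddCircle.add_projection_respects_measure (2 * Real.pi) 0 (meas_image13 a b h0 hb)]
  have h : (QuotientAddGroup.mk ⁻¹'
        ((fun t : ℝ => (t : AddCircle (2 * Real.pi))) '' Set.Ioc a b))
      ∩ Set.Ioc 0 (0 + 2 * Real.pi) = Set.Ioc a b := by
    ext s
    constructor
    · rintro ⟨hs1, hs2⟩
      obtain ⟨u, hu, huv⟩ := hs1
      have hu' : u ∈ Set.Ioc (0:ℝ) (2 * Real.pi) := ⟨lt_of_le_of_lt h0 hu.1, hu.2.trans hb⟩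
      have hs2' : s ∈ Set.Ioc (0:ℝ) (2 * Real.pi) := by rwa [zero_add] at hs2
      rwa [coe_inj13 hu' hs2' huv] at hu
    · intro hs
      exact ⟨⟨s, hs, rfl⟩,
        ⟨lt_of_le_of_lt h0 hs.1, by rw [zero_add]; exact hs.2.trans hb⟩⟩
  rw [h, Real.volume_Ioc]

private def S13 : Set (AddCircle (2 * Real.pi)) :=
  (fun t : ℝ => (t : AddCircle (2 * Real.pi))) '' Set.Ioc 0 (Real.pi / 2)

private lemma pdiv_mono13 {i j : ℕ} (h : i ≤ j) : Real.pi / 2 ^ j ≤ Real.pi / 2 ^ i := by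
  gcongr
  norm_num

private lemma half_le_two_pi : Real.pi / 2 ≤ 2 * Real.pi := by
  have := Real.pi_pos; linarith

private lemma Sk_sub_S13 (k : ℕ) :
    ((fun t : ℝ => (t : AddCircle (2 * Real.pi))) ''
      Set.Ioc (Real.pi / 2 ^ (k + 2)) (Real.pi / 2 ^ (k + 1))) ⊆ S13 := by
  apply Set.image_mono
  apply Set.Ioc_subset_Ioc
  · positivity
  · have := pdiv_mono13 (show 1 ≤ k + 1 by omega)
    simpa [pow_one] using this

private lemma density_eq13 :
    (fun x : AddCircle (2 * Real.pi) => ∑' k : ℕ,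
      Set.indicator
        ((fun t : ℝ => (t : AddCircle (2 * Real.pi))) ''
          Set.Ioc (Real.pi / 2 ^ (k + 2)) (Real.pi / 2 ^ (k + 1)))
        (fun _ => ENNReal.ofReal (2 / Real.pi)) x)
      = Set.indicator S13 (fun _ => ENNReal.ofReal (2 / Real.pi)) := by
  have hπ := Real.pi_pos
  funext x
  by_cases hx : x ∈ S13
  · rw [Set.indicator_of_mem hx]
    obtain ⟨t, ht, rfl⟩ := hx
    have ht' : t ∈ Set.Ioc (0:ℝ) (2 * Real.pi) := ⟨ht.1, ht.2.trans half_le_two_pi⟩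
    -- find the unique k0
    have hex : ∃ n : ℕ, Real.pi / 2 ^ (n + 1) < t := by
      obtain ⟨n, hn⟩ := pow_unbounded_of_one_lt (Real.pi / t) (by norm_num : (1:ℝ) < 2)
      refine ⟨n, ?_⟩
      have h1 : Real.pi / t < 2 ^ (n + 1) :=
        hn.trans_le (pow_le_pow_right₀ (by norm_num) (Nat.le_succ n))
      rw [div_lt_iff₀ ht.1] at h1
      rw [div_lt_iff₀ (by positivity)]
      linarith
    classical
    have hn1 : Nat.find hex ≠ 0 := by
      intro h
      have hsp := Nat.find_spec hex
      rw [h] at hsp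
      norm_num at hsp
      linarith [ht.2]
    obtain ⟨k0, hk0⟩ : ∃ k0, Nat.find hex = k0 + 1 :=
      ⟨Nat.find hex - 1, (Nat.succ_pred_eq_of_pos (Nat.pos_of_ne_zero hn1)).symm⟩
    have hk1 : Real.pi / 2 ^ (k0 + 2) < t := by
      have hsp := Nat.find_spec hex
      rwa [hk0] at hsp
    have hk2 : t ≤ Real.pi / 2 ^ (k0 + 1) := by
      have := Nat.find_min hex (show k0 < Nat.find hex by omega)
      exact not_lt.mp this
    have hzero : ∀ k : ℕ, k ≠ k0 →
        Set.indicator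
          ((fun u : ℝ => (u : AddCircle (2 * Real.pi))) ''
            Set.Ioc (Real.pi / 2 ^ (k + 2)) (Real.pi / 2 ^ (k + 1)))
          (fun _ => ENNReal.ofReal (2 / Real.pi)) ((t : ℝ) : AddCircle (2 * Real.pi)) = 0 := by
      intro k hk
      apply Set.indicator_of_notMem
      rintro ⟨s, hs, hst⟩

      have hs' : s ∈ Set.Ioc (0:ℝ) (2 * Real.pi) :=
        ⟨lt_trans (by positivity) hs.1,
          hs.2.trans ((pdiv_mono13 (show 1 ≤ k + 1 by omega)).trans
            (by simpa [pow_one] using half_le_two_pi))⟩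
      have hst' := coe_inj13 hs' ht' hst
      subst hst'
      rcases lt_or_gt_of_ne hk with h | h
      · have : Real.pi / 2 ^ (k0 + 1) ≤ Real.pi / 2 ^ (k + 2) := pdiv_mono13 (by omega)
        linarith [hs.1, hk2]
      · have : Real.pi / 2 ^ (k + 1) ≤ Real.pi / 2 ^ (k0 + 2) := pdiv_mono13 (by omega)
        linarith [hs.2, hk1]
    rw [tsum_eq_single k0 hzero]
    apply Set.indicator_of_mem
    exact ⟨t, ⟨hk1, hk2⟩, rfl⟩
  · rw [Set.indicator_of_notMem hx]
    rw [ENNReal.tsum_eq_zero]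
    intro k
    exact Set.indicator_of_notMem (fun hmem => hx (Sk_sub_S13 k hmem)) _

private lemma S13_meas : MeasurableSet S13 :=
  meas_image13 0 (Real.pi / 2) le_rfl half_le_two_pi

private lemma mu13_eq : mu13 = ENNReal.ofReal (2 / Real.pi) • (volume.restrict S13) := by
  rw [mu13, density_eq13, withDensity_indicator S13_meas, withDensity_const]

private lemma mu13_apply {A : Set (AddCircle (2 * Real.pi))} (hA : MeasurableSet A) :
    mu13 A = ENNReal.ofReal (2 / Real.pi) * volume (A ∩ S13) := by
  rw [mu13_eq, Measure.smul_apply, Measure.restrict_apply hA, smul_eq_mul]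

private lemma dist_coe_le13 (s t : ℝ) :
    dist ((s : AddCircle (2 * Real.pi))) ((t : AddCircle (2 * Real.pi))) ≤ |s - t| := by
  rw [dist_eq_norm]
  have h : ((s : AddCircle (2 * Real.pi)) - (t : AddCircle (2 * Real.pi)))
      = ((s - t : ℝ) : AddCircle (2 * Real.pi)) := rfl
  rw [h]
  simpa [Real.norm_eq_abs] using QuotientAddGroup.norm_mk_le_norm (S := AddSubgroup.zmultiples (2 * Real.pi)) (m := s - t)

private def K13 : Set (AddCircle (2 * Real.pi)) :=
  (fun t : ℝ => (t : AddCircle (2 * Real.pi))) '' Set.Icc 0 (Real.pi / 2)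

private lemma support_subset13 : msupport mu13 ⊆ K13 := by
  intro x hx
  by_contra hxK
  have hK : IsClosed K13 :=
    (isCompact_Icc.image (AddCircle.continuous_mk' (2 * Real.pi))).isClosed
  obtain ⟨ε, hε, hball⟩ := Metric.isOpen_iff.mp hK.isOpen_compl x hxK
  have h0 : mu13 (closedBall x (ε / 2)) = 0 := by
    rw [mu13_apply measurableSet_closedBall]
    have hempty : closedBall x (ε / 2) ∩ S13 = ∅ := by
      rw [Set.eq_empty_iff_forall_notMem]
      rintro y ⟨hy1, hy2⟩
      have hyK : y ∈ K13 := Set.image_mono Set.Ioc_subset_Icc_self hy2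
      have hyb : y ∈ ball x ε :=
        mem_ball.mpr (lt_of_le_of_lt (mem_closedBall.mp hy1) (by linarith))
      exact hball hyb hyK
    rw [hempty]
    simp
  have := hx (ε / 2) (by linarith)
  rw [h0] at this
  exact lt_irrefl 0 this

/-- mu13 is a probability measure and for every point of its support and
every radius 0 < r ≤ π/8, c·r ≤ μ(B(x,r)) ≤ 2r. -/
theorem stmt13 :
    IsProbabilityMeasure mu13 ∧
    ∃ c : ℝ, 0 < c ∧ ∀ x ∈ msupport mu13, ∀ r : ℝ, 0 < r → r ≤ Real.pi / 8 →
      ENNReal.ofReal (c * r) ≤ mu13 (Metric.closedBall x r) ∧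
      mu13 (Metric.closedBall x r) ≤ ENNReal.ofReal (2 * r) := by
  have hπ := Real.pi_pos
  have hπ2 := Real.two_le_pi
  constructor
  · constructor
    rw [mu13_apply MeasurableSet.univ, Set.univ_inter]
    rw [show S13 = (fun t : ℝ => (t : AddCircle (2 * Real.pi))) '' Set.Ioc 0 (Real.pi / 2) from rfl]
    rw [vol_image13 0 (Real.pi / 2) le_rfl half_le_two_pi, sub_zero,
      ← ENNReal.ofReal_mul (by positivity)]
    rw [show 2 / Real.pi * (Real.pi / 2) = 1 by field_simp]
    exact ENNReal.ofReal_one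
  · refine ⟨2 / Real.pi, by positivity, ?_⟩
    intro x hx r hr0 hr8
    obtain ⟨t, ht, rfl⟩ := support_subset13 hx
    set a := max (t - r) 0 with ha_def
    set b := min (t + r) (Real.pi / 2) with hb_def
    have ha0 : 0 ≤ a := le_max_right _ _
    have hbh : b ≤ Real.pi / 2 := min_le_right _ _
    have ha_le_t : a ≤ t := max_le (by linarith) ht.1
    have hA : t - r ≤ a := le_max_left _ _
    have hB : b ≤ t + r := min_le_left _ _
    have ht_le_b : t ≤ b := le_min (by linarith) ht.2
    have hab : a + r ≤ b := by
      refine le_min (by linarith) ?_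
      rcases le_total t (Real.pi / 4) with h | h
      · linarith
      · rw [ha_def, max_eq_left (by linarith : 0 ≤ t - r)]
        linarith
    -- the interval J := coe '' Ioc a b
    have hJsubS : ((fun u : ℝ => (u : AddCircle (2 * Real.pi))) '' Set.Ioc a b) ⊆ S13 :=
      Set.image_mono (Set.Ioc_subset_Ioc ha0 hbh)
    have hJsubB : ((fun u : ℝ => (u : AddCircle (2 * Real.pi))) '' Set.Ioc a b)
        ⊆ closedBall ((t : AddCircle (2 * Real.pi))) r := by
      rintro _ ⟨s, hs, rfl⟩
      rw [mem_closedBall]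
      refine (dist_coe_le13 s t).trans ?_
      rw [abs_le]
      constructor
      · linarith [hs.1, hab, ht_le_b]
      · linarith [hs.2, hbh, ha_le_t, hs.1]
    constructor
    · -- lower bound
      calc ENNReal.ofReal (2 / Real.pi * r)
          ≤ ENNReal.ofReal (2 / Real.pi) * ENNReal.ofReal (b - a) := by
            rw [← ENNReal.ofReal_mul (by positivity)]
            apply ENNReal.ofReal_le_ofReal
            have h1 : r ≤ b - a := by linarith
            exact mul_le_mul_of_nonneg_left h1 (by positivity)
        _ = mu13 ((fun u : ℝ => (u : AddCircle (2 * Real.pi))) '' Set.Ioc a b) := by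
            rw [mu13_apply (meas_image13 a b ha0 (hbh.trans half_le_two_pi)),
              Set.inter_eq_left.mpr hJsubS,
              vol_image13 a b ha0 (hbh.trans half_le_two_pi)]
        _ ≤ mu13 (closedBall ((t : AddCircle (2 * Real.pi))) r) := measure_mono hJsubB
    · -- upper bound
      calc mu13 (closedBall ((t : AddCircle (2 * Real.pi))) r)
          = ENNReal.ofReal (2 / Real.pi) *
              volume (closedBall ((t : AddCircle (2 * Real.pi))) r ∩ S13) :=
            mu13_apply measurableSet_closedBall
        _ ≤ ENNReal.ofReal (2 / Real.pi) *
              volume (closedBall ((t : AddCircle (2 * Real.pi))) r) := by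
            gcongr
            exact Set.inter_subset_left
        _ = ENNReal.ofReal (2 / Real.pi) * ENNReal.ofReal (min (2 * Real.pi) (2 * r)) := by
            rw [AddCircle.volume_closedBall]
        _ ≤ ENNReal.ofReal (2 * r) := by
            rw [← ENNReal.ofReal_mul (by positivity)]
            apply ENNReal.ofReal_le_ofReal
            have hmin : min (2 * Real.pi) (2 * r) ≤ 2 * r := min_le_right _ _
            have hmin0 : 0 ≤ min (2 * Real.pi) (2 * r) := le_min (by linarith) (by linarith)
            have h2π : 2 / Real.pi ≤ 1 := by
              rw [div_le_one hπ]; linarith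
            nlinarith
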